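/- Let (L, [·,·], Δ, α, r) be a coboundary Hom-Lie superbialgebra. Then the following are equivalent: (1) L is quasi-triangular, i.e. [[r,r]]^α = 0; (2) (α⊗Δ)(r) = −[r₁₂, r₁₃]; (3) (Δ⊗α)(r) = [r₁₃, r₂₃]. -/

import Mathlib

open TensorProduct

variable (K : Type*) [Field K] [CharZero K]

/-- The super sign `(-1)^{p·q}` for parities `p q : ZMod 2`. -/
def eps (p q : ZMod 2) : K := (-1 : K) ^ (p.val * q.val)

variable {K}

section Defs

variable {L M : Type*} [AddCommGroup L] [Module K L] [AddCommGroup M] [Module K M]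

/-- `x` is homogeneous of parity `p` with respect to the grading involution `σ`
(`σ` acts as `(-1)^i` on the degree-`i` part of the `ℤ₂`-graded space). -/
def IsHomog (σ : L →ₗ[K] L) (p : ZMod 2) (x : L) : Prop :=
  σ x = ((-1 : K) ^ p.val) • x

/-- The operator multiplying a homogeneous element of parity `q` by `(-1)^{p·q}`. -/
noncomputable def signPow (σ : L →ₗ[K] L) (p : ZMod 2) : L →ₗ[K] L :=
  ((2 : K)⁻¹ * (1 + (-1 : K) ^ p.val)) • (LinearMap.id : L →ₗ[K] L)
    + ((2 : K)⁻¹ * (1 - (-1 : K) ^ p.val)) • σ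

/-- The operator multiplying `x ⊗ y` (with `x, y` homogeneous of parities `p, q`)
by the Koszul sign `(-1)^{p·q}`. -/
noncomputable def signOp (σL : L →ₗ[K] L) (σM : M →ₗ[K] M) :
    L ⊗[K] M →ₗ[K] L ⊗[K] M :=
  (2 : K)⁻¹ • ((LinearMap.id : L ⊗[K] M →ₗ[K] L ⊗[K] M)
    + TensorProduct.map σL LinearMap.id
    + TensorProduct.map LinearMap.id σM
    - TensorProduct.map σL σM)

/-- The super twist `τ(x ⊗ y) = (-1)^{|x||y|} y ⊗ x`. -/
noncomputable def superTwist (σ : L →ₗ[K] L) : L ⊗[K] L →ₗ[K] L ⊗[K] L :=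
  (TensorProduct.comm K L L).toLinearMap ∘ₗ signOp σ σ

/-- The super cyclic map `ξ(x ⊗ y ⊗ z) = (-1)^{|x|(|y|+|z|)} y ⊗ z ⊗ x`. -/
noncomputable def superCyclic (σ : L →ₗ[K] L) :
    L ⊗[K] (L ⊗[K] L) →ₗ[K] L ⊗[K] (L ⊗[K] L) :=
  (TensorProduct.assoc K L L L).toLinearMap
    ∘ₗ (TensorProduct.comm K L (L ⊗[K] L)).toLinearMap
    ∘ₗ signOp σ (TensorProduct.map σ σ)

/-- The adjoint action `ad_x` on `L ⊗ L`, for `x` homogeneous of parity `p`: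
`ad_x(y₁ ⊗ y₂) = [x,y₁] ⊗ α(y₂) + (-1)^{|x||y₁|} α(y₁) ⊗ [x,y₂]`. -/
noncomputable def adT (σ : L →ₗ[K] L) (br : L →ₗ[K] L →ₗ[K] L) (α : L →ₗ[K] L)
    (p : ZMod 2) (x : L) : L ⊗[K] L →ₗ[K] L ⊗[K] L :=
  TensorProduct.map (br x) α + TensorProduct.map (α ∘ₗ signPow σ p) (br x)

/-- The adjoint action `ad_x` on `L ⊗ (L ⊗ L)`, for `x` homogeneous of parity `p`. -/
noncomputable def adT3 (σ : L →ₗ[K] L) (br : L →ₗ[K] L →ₗ[K] L) (α : L →ₗ[K] L)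
    (p : ZMod 2) (x : L) :
    L ⊗[K] (L ⊗[K] L) →ₗ[K] L ⊗[K] (L ⊗[K] L) :=
  TensorProduct.map (br x) (TensorProduct.map α α)
    + TensorProduct.map (α ∘ₗ signPow σ p) (TensorProduct.map (br x) α)
    + TensorProduct.map (α ∘ₗ signPow σ p)
        (TensorProduct.map (α ∘ₗ signPow σ p) (br x))

/-- A Hom-Lie superalgebra `(L, [·,·], α)` with grading involution `σ`:
the bracket and `α` are even, the bracket is skew-supersymmetric and
satisfies the Hom-super-Jacobi identity. -/
def IsHomLieSuperalgebra (σ : L →ₗ[K] L) (br : L →ₗ[K] L →ₗ[K] L) (α : L →ₗ[K] L) : Prop :=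
  σ ∘ₗ σ = LinearMap.id
  ∧ (∀ x y, σ (br x y) = br (σ x) (σ y))
  ∧ (∀ x, σ (α x) = α (σ x))
  ∧ (∀ p q x y, IsHomog σ p x → IsHomog σ q y → br x y = -(eps K p q) • br y x)
  ∧ (∀ p q r x y z, IsHomog σ p x → IsHomog σ q y → IsHomog σ r z →
      eps K p r • br (α x) (br y z) + eps K r q • br (α z) (br x y)
        + eps K q p • br (α y) (br z x) = 0)

/-- Multiplicativity: `α([x,y]) = [α(x), α(y)]`. -/
def IsMultiplicative (br : L →ₗ[K] L →ₗ[K] L) (α : L →ₗ[K] L) : Prop :=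
  ∀ x y, α (br x y) = br (α x) (α y)

/-- A Hom-Lie supercoalgebra `(L, Δ, α)` with grading involution `σ`. -/
def IsHomLieSupercoalgebra (σ α : L →ₗ[K] L) (Δ : L →ₗ[K] L ⊗[K] L) : Prop :=
  σ ∘ₗ σ = LinearMap.id
  ∧ (∀ x, σ (α x) = α (σ x))
  ∧ TensorProduct.map σ σ ∘ₗ Δ = Δ ∘ₗ σ
  ∧ (∀ x, ∃ u, Δ x = u - superTwist σ u)
  ∧ (LinearMap.id + superCyclic σ + superCyclic σ ∘ₗ superCyclic σ)
      ∘ₗ TensorProduct.map α Δ ∘ₗ Δ = 0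

/-- Co-multiplicativity: `Δ ∘ α = α^{⊗2} ∘ Δ`. -/
def IsComultiplicative (α : L →ₗ[K] L) (Δ : L →ₗ[K] L ⊗[K] L) : Prop :=
  Δ ∘ₗ α = TensorProduct.map α α ∘ₗ Δ

/-- A Hom-Lie superbialgebra `(L, [·,·], Δ, α)`. -/
def IsHomLieSuperbialgebra (σ : L →ₗ[K] L) (br : L →ₗ[K] L →ₗ[K] L) (α : L →ₗ[K] L)
    (Δ : L →ₗ[K] L ⊗[K] L) : Prop :=
  IsHomLieSuperalgebra σ br α
  ∧ IsHomLieSupercoalgebra σ α Δ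
  ∧ ∀ p q x y, IsHomog σ p x → IsHomog σ q y →
      Δ (br x y) = adT σ br α p (α x) (Δ y) - eps K p q • adT σ br α q (α y) (Δ x)

/-- A multiplicative Hom-Lie superbialgebra. -/
def IsMultHomLieSuperbialgebra (σ : L →ₗ[K] L) (br : L →ₗ[K] L →ₗ[K] L) (α : L →ₗ[K] L)
    (Δ : L →ₗ[K] L ⊗[K] L) : Prop :=
  IsHomLieSuperbialgebra σ br α Δ ∧ IsMultiplicative br α ∧ IsComultiplicative α Δ

/-- An admissible Hom-Lie superalgebra: `[(Id - α²)(x), α(y)] = 0`. -/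
def IsAdmissible (σ : L →ₗ[K] L) (br : L →ₗ[K] L →ₗ[K] L) (α : L →ₗ[K] L) : Prop :=
  IsHomLieSuperalgebra σ br α ∧ ∀ x y, br (x - α (α x)) (α y) = 0

/-- A morphism of Hom-Lie superbialgebras: an even linear map commuting with the
twist maps, the brackets and the cobrackets. -/
def IsBialgMorphism {L₂ : Type*} [AddCommGroup L₂] [Module K L₂]
    (σ₁ : L →ₗ[K] L) (br₁ : L →ₗ[K] L →ₗ[K] L) (α₁ : L →ₗ[K] L) (Δ₁ : L →ₗ[K] L ⊗[K] L)
    (σ₂ : L₂ →ₗ[K] L₂) (br₂ : L₂ →ₗ[K] L₂ →ₗ[K] L₂) (α₂ : L₂ →ₗ[K] L₂)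
    (Δ₂ : L₂ →ₗ[K] L₂ ⊗[K] L₂) (f : L →ₗ[K] L₂) : Prop :=
  (∀ x, σ₂ (f x) = f (σ₁ x)) ∧ (∀ x, α₂ (f x) = f (α₁ x))
  ∧ (∀ x y, f (br₁ x y) = br₂ (f x) (f y))
  ∧ TensorProduct.map f f ∘ₗ Δ₁ = Δ₂ ∘ₗ f

/-- A representation `ρ` of the Hom-Lie superalgebra `(L, br, αg)` on `(M, σM)`
with respect to `A`. -/
def IsRepresentation (σg : L →ₗ[K] L) (br : L →ₗ[K] L →ₗ[K] L) (αg : L →ₗ[K] L)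
    (σM A : M →ₗ[K] M) (ρ : L →ₗ[K] M →ₗ[K] M) : Prop :=
  (∀ x v, σM (ρ x v) = ρ (σg x) (σM v))
  ∧ (∀ x, ρ (αg x) ∘ₗ A = A ∘ₗ ρ x)
  ∧ (∀ p q x y, IsHomog σg p x → IsHomog σg q y →
      ρ (br x y) ∘ₗ A = ρ (αg x) ∘ₗ ρ y - eps K p q • (ρ (αg y) ∘ₗ ρ x))

/-- The signed middle-four interchange
`(r₁ ⊗ r₂) ⊗ (r₁' ⊗ r₂') ↦ (-1)^{|r₂||r₁'|} (r₁ ⊗ r₁') ⊗ (r₂ ⊗ r₂')`. -/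
noncomputable def signedMidSwap (σ : L →ₗ[K] L) :
    (L ⊗[K] L) ⊗[K] (L ⊗[K] L) →ₗ[K] (L ⊗[K] L) ⊗[K] (L ⊗[K] L) :=
  (TensorProduct.assoc K (L ⊗[K] L) L L).toLinearMap
    ∘ₗ TensorProduct.map (TensorProduct.assoc K L L L).symm.toLinearMap LinearMap.id
    ∘ₗ TensorProduct.map (TensorProduct.map LinearMap.id (superTwist σ)) LinearMap.id
    ∘ₗ TensorProduct.map (TensorProduct.assoc K L L L).toLinearMap LinearMap.id
    ∘ₗ (TensorProduct.assoc K (L ⊗[K] L) L L).symm.toLinearMap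

/-- `[r₁₂, r'₁₃] = Σ (-1)^{|r'₁||r₂|} [r₁,r'₁] ⊗ α(r₂) ⊗ α(r'₂)`. -/
noncomputable def br1213 (σ : L →ₗ[K] L) (br : L →ₗ[K] L →ₗ[K] L) (α : L →ₗ[K] L)
    (r r' : L ⊗[K] L) : L ⊗[K] (L ⊗[K] L) :=
  TensorProduct.map (TensorProduct.lift br) (TensorProduct.map α α)
    (signedMidSwap σ (r ⊗ₜ[K] r'))

/-- `[r₁₂, r'₂₃] = Σ α(r₁) ⊗ [r₂,r'₁] ⊗ α(r'₂)`. -/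
noncomputable def br1223 (br : L →ₗ[K] L →ₗ[K] L) (α : L →ₗ[K] L)
    (r r' : L ⊗[K] L) : L ⊗[K] (L ⊗[K] L) :=
  TensorProduct.map α
      (TensorProduct.map (TensorProduct.lift br) α
        ∘ₗ (TensorProduct.assoc K L L L).symm.toLinearMap)
    ((TensorProduct.assoc K L L (L ⊗[K] L)).toLinearMap (r ⊗ₜ[K] r'))

/-- `[r₁₃, r'₂₃] = Σ (-1)^{|r'₁||r₂|} α(r₁) ⊗ α(r'₁) ⊗ [r₂,r'₂]`. -/
noncomputable def br1323 (σ : L →ₗ[K] L) (br : L →ₗ[K] L →ₗ[K] L) (α : L →ₗ[K] L)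
    (r r' : L ⊗[K] L) : L ⊗[K] (L ⊗[K] L) :=
  (TensorProduct.assoc K L L L).toLinearMap
    (TensorProduct.map (TensorProduct.map α α) (TensorProduct.lift br)
      (signedMidSwap σ (r ⊗ₜ[K] r')))

/-- The left-hand side `[[r,r]]^α` of the classical Hom-Yang-Baxter equation. -/
noncomputable def chybeEl (σ : L →ₗ[K] L) (br : L →ₗ[K] L →ₗ[K] L) (α : L →ₗ[K] L)
    (r : L ⊗[K] L) : L ⊗[K] (L ⊗[K] L) :=
  br1213 σ br α r r + br1223 br α r r + br1323 σ br α r r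

/-- A coboundary Hom-Lie superbialgebra. -/
def IsCoboundary (σ : L →ₗ[K] L) (br : L →ₗ[K] L →ₗ[K] L) (α : L →ₗ[K] L)
    (Δ : L →ₗ[K] L ⊗[K] L) (r : L ⊗[K] L) : Prop :=
  IsHomLieSuperbialgebra σ br α Δ
  ∧ TensorProduct.map α α r = r
  ∧ ∀ p x, IsHomog σ p x → Δ x = adT σ br α p x r

/-- A quasi-triangular Hom-Lie superbialgebra: a coboundary one where `r`
satisfies the classical Hom-Yang-Baxter equation. -/
def IsQuasiTriangular (σ : L →ₗ[K] L) (br : L →ₗ[K] L →ₗ[K] L) (α : L →ₗ[K] L)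
    (Δ : L →ₗ[K] L ⊗[K] L) (r : L ⊗[K] L) : Prop :=
  IsCoboundary σ br α Δ r ∧ chybeEl σ br α r = 0

/-- The global linear map `x ↦ ad_x(r) = Σ [x,r₁] ⊗ α(r₂) + (-1)^{|x||r₁|} α(r₁) ⊗ [x,r₂]`. -/
noncomputable def adMap (σ : L →ₗ[K] L) (br : L →ₗ[K] L →ₗ[K] L) (α : L →ₗ[K] L)
    (r : L ⊗[K] L) : L →ₗ[K] L ⊗[K] L :=
  (TensorProduct.map (TensorProduct.lift br) α
      ∘ₗ (TensorProduct.assoc K L L L).symm.toLinearMap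
    + TensorProduct.map α (TensorProduct.lift br)
        ∘ₗ (TensorProduct.assoc K L L L).toLinearMap
        ∘ₗ TensorProduct.map (superTwist σ) LinearMap.id
        ∘ₗ (TensorProduct.assoc K L L L).symm.toLinearMap)
  ∘ₗ (TensorProduct.mk K L (L ⊗[K] L)).flip r

end Defs
set_option linter.unusedSectionVars false
section Aux
variable {K : Type*} [Field K] [CharZero K] {L : Type*} [AddCommGroup L] [Module K L]

/-- scalar sign -/
noncomputable def sg (K : Type*) [Field K] (p : ZMod 2) : K := (-1 : K) ^ p.val

lemma sg_sq (p : ZMod 2) : sg K p * sg K p = 1 := by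
  fin_cases p <;> norm_num [sg, ZMod.val_one, ZMod.val]

lemma sg_ne_zero (p : ZMod 2) : sg K p ≠ 0 := by
  fin_cases p <;> norm_num [sg, ZMod.val_one, ZMod.val]

lemma isHomog_def {σ : L →ₗ[K] L} {p : ZMod 2} {x : L} (h : IsHomog σ p x) :
    σ x = sg K p • x := h

lemma scalar_signOp (p q : ZMod 2) :
    (2:K)⁻¹ * (1 + sg K p + sg K q - sg K p * sg K q) = eps K p q := by
  fin_cases p <;> fin_cases q <;> norm_num [sg, eps, ZMod.val_one, ZMod.val]

lemma scalar_signPow (p q : ZMod 2) :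
    (2:K)⁻¹ * (1 + sg K p) + (2:K)⁻¹ * (1 - sg K p) * sg K q = eps K p q := by
  fin_cases p <;> fin_cases q <;> norm_num [sg, eps, ZMod.val_one, ZMod.val]

lemma scalar_s1 (pj pi qi : ZMod 2) :
    1 - eps K qi pj * eps K pi pj
      = (2:K)⁻¹ * (1 - sg K pj) * (1 - sg K pi * sg K qi) := by
  fin_cases pj <;> fin_cases pi <;> fin_cases qi <;>
    norm_num [sg, eps, ZMod.val_one, ZMod.val]

lemma scalar_s2 (pj pi qi : ZMod 2) :
    eps K pj pi - eps K qi pj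
      = (2:K)⁻¹ * (1 - sg K pj) * (1 - sg K pi * sg K qi) * eps K pj pi := by
  fin_cases pj <;> fin_cases pi <;> fin_cases qi <;>
    norm_num [sg, eps, ZMod.val_one, ZMod.val]

/-- parity projection -/
noncomputable def homProj (σ : L →ₗ[K] L) (u : ZMod 2) (x : L) : L :=
  (2:K)⁻¹ • (x + sg K u • σ x)

lemma homProj_isHomog {σ : L →ₗ[K] L} (hσσ : σ ∘ₗ σ = LinearMap.id)
    (u : ZMod 2) (x : L) : IsHomog σ u (homProj σ u x) := by
  have h2 : σ (σ x) = x := by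
    have := LinearMap.congr_fun hσσ x; simpa using this
  show σ _ = _
  rw [homProj, map_smul, map_add, map_smul, h2]
  fin_cases u <;> simp [sg, ZMod.val_one, ZMod.val] <;> module

lemma homProj_sum {σ : L →ₗ[K] L} (x : L) :
    homProj σ 0 x + homProj σ 1 x = x := by
  simp [homProj, sg, ZMod.val_one]
  module

lemma exists_homog_decomp {σ : L →ₗ[K] L} (hσσ : σ ∘ₗ σ = LinearMap.id)
    (r : L ⊗[K] L) :
    ∃ (ι : Type) (_ : Fintype ι) (a b : ι → L) (p q : ι → ZMod 2),
      (∀ i, IsHomog σ (p i) (a i)) ∧ (∀ i, IsHomog σ (q i) (b i)) ∧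
      r = ∑ i, a i ⊗ₜ[K] b i := by
  induction r with
  | zero =>
      exact ⟨PEmpty, inferInstance, PEmpty.elim, PEmpty.elim,
        fun i => i.elim, fun i => i.elim, fun i => i.elim, fun i => i.elim,
        by simp⟩
  | tmul x y =>
      refine ⟨ZMod 2 × ZMod 2, inferInstance,
        fun i => homProj σ i.1 x, fun i => homProj σ i.2 y,
        Prod.fst, Prod.snd,
        fun i => homProj_isHomog hσσ _ _, fun i => homProj_isHomog hσσ _ _, ?_⟩
      have huniv : (Finset.univ : Finset (ZMod 2)) = {0, 1} := by decide
      rw [Fintype.sum_prod_type]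
      have h2 : ∀ f : ZMod 2 → L ⊗[K] L, ∑ u : ZMod 2, f u = f 0 + f 1 := by
        intro f
        rw [huniv, Finset.sum_insert (by decide), Finset.sum_singleton]
      rw [h2 fun u => ∑ v : ZMod 2, homProj σ u x ⊗ₜ[K] homProj σ v y]
      rw [h2 fun v => homProj σ 0 x ⊗ₜ[K] homProj σ v y]
      rw [h2 fun v => homProj σ 1 x ⊗ₜ[K] homProj σ v y]
      rw [← TensorProduct.tmul_add, ← TensorProduct.tmul_add, ← TensorProduct.add_tmul,
        homProj_sum, homProj_sum]
  | add u v hu hv =>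
      obtain ⟨ι₁, _, a₁, b₁, p₁, q₁, ha₁, hb₁, h₁⟩ := hu
      obtain ⟨ι₂, _, a₂, b₂, p₂, q₂, ha₂, hb₂, h₂⟩ := hv
      refine ⟨ι₁ ⊕ ι₂, inferInstance, Sum.elim a₁ a₂, Sum.elim b₁ b₂,
        Sum.elim p₁ p₂, Sum.elim q₁ q₂, ?_, ?_, ?_⟩
      · rintro (i | i)
        · exact ha₁ i
        · exact ha₂ i
      · rintro (i | i)
        · exact hb₁ i
        · exact hb₂ i
      · rw [Fintype.sum_sum_type]; simp [h₁, h₂]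

end Aux
section Aux2
variable {K : Type*} [Field K] [CharZero K] {L M : Type*} [AddCommGroup L] [Module K L]
  [AddCommGroup M] [Module K M]

lemma signOp_tmul {σL : L →ₗ[K] L} {σM : M →ₗ[K] M} {p q : ZMod 2} {x : L} {y : M}
    (hx : IsHomog σL p x) (hy : IsHomog σM q y) :
    signOp σL σM (x ⊗ₜ[K] y) = eps K p q • (x ⊗ₜ[K] y) := by
  have hx' : σL x = sg K p • x := hx
  have hy' : σM y = sg K q • y := hy
  rw [signOp, ← scalar_signOp p q]
  simp only [LinearMap.smul_apply, LinearMap.sub_apply, LinearMap.add_apply,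
    TensorProduct.map_tmul, LinearMap.id_apply, hx', hy', ← smul_tmul', tmul_smul,
    LinearMap.id_coe, id_eq, sg]
  module

lemma superTwist_tmul {σ : L →ₗ[K] L} {p q : ZMod 2} {x y : L}
    (hx : IsHomog σ p x) (hy : IsHomog σ q y) :
    superTwist σ (x ⊗ₜ[K] y) = eps K p q • (y ⊗ₜ[K] x) := by
  rw [superTwist, LinearMap.comp_apply, signOp_tmul hx hy]
  simp

lemma signedMidSwap_tmul {σ : L →ₗ[K] L} {q p' : ZMod 2} {x y z w : L}
    (hy : IsHomog σ q y) (hz : IsHomog σ p' z) :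
    signedMidSwap σ ((x ⊗ₜ[K] y) ⊗ₜ[K] (z ⊗ₜ[K] w))
      = eps K q p' • ((x ⊗ₜ[K] z) ⊗ₜ[K] (y ⊗ₜ[K] w)) := by
  rw [signedMidSwap]
  simp [superTwist_tmul hy hz, tmul_smul, smul_tmul']

lemma br1213_tmul {σ : L →ₗ[K] L} {br : L →ₗ[K] L →ₗ[K] L} {α : L →ₗ[K] L}
    {q p' : ZMod 2} {x y z w : L} (hy : IsHomog σ q y) (hz : IsHomog σ p' z) :
    br1213 σ br α (x ⊗ₜ[K] y) (z ⊗ₜ[K] w)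
      = eps K q p' • (br x z ⊗ₜ[K] (α y ⊗ₜ[K] α w)) := by
  rw [br1213, signedMidSwap_tmul hy hz]
  simp

lemma br1223_tmul {br : L →ₗ[K] L →ₗ[K] L} {α : L →ₗ[K] L} {x y z w : L} :
    br1223 br α (x ⊗ₜ[K] y) (z ⊗ₜ[K] w)
      = α x ⊗ₜ[K] (br y z ⊗ₜ[K] α w) := by
  rw [br1223]
  simp

lemma br1323_tmul {σ : L →ₗ[K] L} {br : L →ₗ[K] L →ₗ[K] L} {α : L →ₗ[K] L}
    {q p' : ZMod 2} {x y z w : L} (hy : IsHomog σ q y) (hz : IsHomog σ p' z) :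
    br1323 σ br α (x ⊗ₜ[K] y) (z ⊗ₜ[K] w)
      = eps K q p' • (α x ⊗ₜ[K] (α z ⊗ₜ[K] br y w)) := by
  rw [br1323, signedMidSwap_tmul hy hz]
  simp

lemma signPow_apply {σ : L →ₗ[K] L} {p q : ZMod 2} {x : L} (hx : IsHomog σ q x) :
    signPow σ p x = eps K p q • x := by
  have hx' : σ x = sg K q • x := hx
  rw [signPow, ← scalar_signPow p q]
  simp only [LinearMap.add_apply, LinearMap.smul_apply, LinearMap.id_apply, hx', sg]
  module

lemma adT_tmul {σ : L →ₗ[K] L} {br : L →ₗ[K] L →ₗ[K] L} {α : L →ₗ[K] L}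
    {p p' : ZMod 2} {x z w : L} (hz : IsHomog σ p' z) :
    adT σ br α p x (z ⊗ₜ[K] w)
      = br x z ⊗ₜ[K] α w + eps K p p' • (α z ⊗ₜ[K] br x w) := by
  rw [adT]
  simp [signPow_apply hz, smul_tmul']

variable {ι : Type*} [Fintype ι]

lemma br1213_sum {σ : L →ₗ[K] L} {br : L →ₗ[K] L →ₗ[K] L} {α : L →ₗ[K] L}
    (F G : ι → L ⊗[K] L) :
    br1213 σ br α (∑ j, F j) (∑ i, G i) = ∑ j, ∑ i, br1213 σ br α (F j) (G i) := by
  simp only [br1213, TensorProduct.sum_tmul, TensorProduct.tmul_sum, map_sum]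
  rw [Finset.sum_comm]

lemma br1223_sum {br : L →ₗ[K] L →ₗ[K] L} {α : L →ₗ[K] L}
    (F G : ι → L ⊗[K] L) :
    br1223 br α (∑ j, F j) (∑ i, G i) = ∑ j, ∑ i, br1223 br α (F j) (G i) := by
  simp only [br1223, TensorProduct.sum_tmul, TensorProduct.tmul_sum, map_sum]
  rw [Finset.sum_comm]

lemma br1323_sum {σ : L →ₗ[K] L} {br : L →ₗ[K] L →ₗ[K] L} {α : L →ₗ[K] L}
    (F G : ι → L ⊗[K] L) :
    br1323 σ br α (∑ j, F j) (∑ i, G i) = ∑ j, ∑ i, br1323 σ br α (F j) (G i) := by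
  simp only [br1323, TensorProduct.sum_tmul, TensorProduct.tmul_sum, map_sum]
  rw [Finset.sum_comm]

end Aux2
/-- For a coboundary Hom-Lie superbialgebra, the CHYBE is
equivalent to `(α ⊗ Δ)(r) = -[r₁₂, r₁₃]` and to `(Δ ⊗ α)(r) = [r₁₃, r₂₃]`. -/
theorem coboundary_quasiTriangular_characterisations
    {K : Type*} [Field K] [CharZero K] {L : Type*} [AddCommGroup L] [Module K L]
    (σ : L →ₗ[K] L) (br : L →ₗ[K] L →ₗ[K] L) (α : L →ₗ[K] L) (Δ : L →ₗ[K] L ⊗[K] L)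
    (r : L ⊗[K] L)
    (hc : IsCoboundary σ br α Δ r) :
    (chybeEl σ br α r = 0 ↔ TensorProduct.map α Δ r = -br1213 σ br α r r)
      ∧ (chybeEl σ br α r = 0 ↔
          (TensorProduct.assoc K L L L).toLinearMap (TensorProduct.map Δ α r)
            = br1323 σ br α r r) := by
  obtain ⟨⟨⟨hσσ, hbre, hσα, hskew, -⟩, ⟨-, -, heven, -, -⟩, -⟩, -, hΔr⟩ := hc
  obtain ⟨ι, _inst, a, b, p, q, ha, hb, hr⟩ := exists_homog_decomp hσσ r
  -- the formula for the cobracket on homogeneous elements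
  have hDelta : ∀ (u : ZMod 2) (x : L), IsHomog σ u x →
      Δ x = ∑ i, (br x (a i) ⊗ₜ[K] α (b i)
        + eps K u (p i) • (α (a i) ⊗ₜ[K] br x (b i))) := by
    intro u x hx
    rw [hΔr u x hx, hr, map_sum]
    exact Finset.sum_congr rfl fun i _ => adT_tmul (ha i)
  -- the invariance property coming from evenness of Δ
  have hINV : ∀ (u : ZMod 2) (x : L), IsHomog σ u x →
      ∑ i, (1 - sg K (p i) * sg K (q i)) • (br x (a i) ⊗ₜ[K] α (b i)
        + eps K u (p i) • (α (a i) ⊗ₜ[K] br x (b i))) = 0 := by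
    intro u x hx
    have hσx : σ x = sg K u • x := hx
    have h1 := LinearMap.congr_fun heven x
    simp only [LinearMap.comp_apply] at h1
    rw [hσx, map_smul, hDelta u x hx, map_sum] at h1
    have h2 : ∀ i, TensorProduct.map σ σ (br x (a i) ⊗ₜ[K] α (b i)
        + eps K u (p i) • (α (a i) ⊗ₜ[K] br x (b i)))
        = sg K u • ((sg K (p i) * sg K (q i)) • (br x (a i) ⊗ₜ[K] α (b i)
            + eps K u (p i) • (α (a i) ⊗ₜ[K] br x (b i)))) := by
      intro i
      have hai : σ (a i) = sg K (p i) • a i := ha i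
      have hbi' : σ (b i) = sg K (q i) • b i := hb i
      simp only [map_add, map_smul, TensorProduct.map_tmul, hbre, hσα, hσx, hai,
        hbi', LinearMap.smul_apply, map_smul, ← smul_tmul', tmul_smul, smul_smul]
      module
    rw [Finset.sum_congr rfl (fun i _ => h2 i), ← Finset.smul_sum] at h1
    have h3 := smul_right_injective (L ⊗[K] L) (sg_ne_zero u) h1
    simp only [sub_smul, one_smul, Finset.sum_sub_distrib, h3, sub_self]
  -- explicit double-sum formulas
  have hB1213 : br1213 σ br α r r = ∑ j, ∑ i,
      eps K (q j) (p i) • (br (a j) (a i) ⊗ₜ[K] (α (b j) ⊗ₜ[K] α (b i))) := by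
    rw [hr, br1213_sum]
    exact Finset.sum_congr rfl fun j _ => Finset.sum_congr rfl fun i _ =>
      br1213_tmul (hb j) (ha i)
  have hB1223 : br1223 br α r r = ∑ j, ∑ i,
      α (a j) ⊗ₜ[K] (br (b j) (a i) ⊗ₜ[K] α (b i)) := by
    rw [hr, br1223_sum]
    exact Finset.sum_congr rfl fun j _ => Finset.sum_congr rfl fun i _ =>
      br1223_tmul
  have hB1323 : br1323 σ br α r r = ∑ j, ∑ i,
      eps K (q j) (p i) • (α (a j) ⊗ₜ[K] (α (a i) ⊗ₜ[K] br (b j) (b i))) := by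
    rw [hr, br1323_sum]
    exact Finset.sum_congr rfl fun j _ => Finset.sum_congr rfl fun i _ =>
      br1323_tmul (hb j) (ha i)
  -- identity (A)
  have hαΔ : TensorProduct.map α Δ r = ∑ j, ∑ i,
      (α (a j) ⊗ₜ[K] (br (b j) (a i) ⊗ₜ[K] α (b i))
        + eps K (q j) (p i) • (α (a j) ⊗ₜ[K] (α (a i) ⊗ₜ[K] br (b j) (b i)))) := by
    rw [hr, map_sum]
    refine Finset.sum_congr rfl fun j _ => ?_
    rw [TensorProduct.map_tmul, hDelta (q j) (b j) (hb j), TensorProduct.tmul_sum]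
    exact Finset.sum_congr rfl fun i _ => by
      rw [TensorProduct.tmul_add, TensorProduct.tmul_smul]
  have hA : TensorProduct.map α Δ r = br1223 br α r r + br1323 σ br α r r := by
    rw [hαΔ, hB1223, hB1323, ← Finset.sum_add_distrib]
    exact Finset.sum_congr rfl fun j _ => by rw [← Finset.sum_add_distrib]
  -- identity (B)
  have hΔα : (TensorProduct.assoc K L L L).toLinearMap (TensorProduct.map Δ α r)
      = ∑ j, ∑ i, (br (a j) (a i) ⊗ₜ[K] (α (b i) ⊗ₜ[K] α (b j))
        + eps K (p j) (p i) • (α (a i) ⊗ₜ[K] (br (a j) (b i) ⊗ₜ[K] α (b j)))) := by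
    rw [hr, map_sum, map_sum]
    refine Finset.sum_congr rfl fun j _ => ?_
    rw [TensorProduct.map_tmul, hDelta (p j) (a j) (ha j), TensorProduct.sum_tmul,
      map_sum]
    exact Finset.sum_congr rfl fun i _ => by
      rw [TensorProduct.add_tmul, map_add]
      simp [TensorProduct.assoc_tmul, TensorProduct.smul_tmul', TensorProduct.tmul_smul]
  have h13 : br1213 σ br α r r = ∑ j, ∑ i,
      -((eps K (q i) (p j) * eps K (p i) (p j)) •
        (br (a j) (a i) ⊗ₜ[K] (α (b i) ⊗ₜ[K] α (b j)))) := by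
    rw [hB1213, Finset.sum_comm]
    refine Finset.sum_congr rfl fun j _ => Finset.sum_congr rfl fun i _ => ?_
    rw [hskew (p i) (p j) (a i) (a j) (ha i) (ha j)]
    simp only [neg_smul, LinearMap.neg_apply, smul_smul, TensorProduct.neg_tmul,
      TensorProduct.smul_tmul', smul_neg, TensorProduct.tmul_smul]
  have h23 : br1223 br α r r = ∑ j, ∑ i,
      -(eps K (q i) (p j) • (α (a i) ⊗ₜ[K] (br (a j) (b i) ⊗ₜ[K] α (b j)))) := by
    rw [hB1223, Finset.sum_comm]
    refine Finset.sum_congr rfl fun j _ => Finset.sum_congr rfl fun i _ => ?_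
    rw [hskew (q i) (p j) (b i) (a j) (hb i) (ha j)]
    rw [TensorProduct.smul_tmul, TensorProduct.tmul_smul, TensorProduct.tmul_smul]
    module
  have key : ∀ j : ι,
      (∑ i, (br (a j) (a i) ⊗ₜ[K] (α (b i) ⊗ₜ[K] α (b j))
        + eps K (p j) (p i) • (α (a i) ⊗ₜ[K] (br (a j) (b i) ⊗ₜ[K] α (b j)))))
      = ∑ i, ((eps K (q i) (p j) * eps K (p i) (p j)) •
            (br (a j) (a i) ⊗ₜ[K] (α (b i) ⊗ₜ[K] α (b j)))
          + eps K (q i) (p j) • (α (a i) ⊗ₜ[K] (br (a j) (b i) ⊗ₜ[K] α (b j)))) := by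
    intro j
    rw [← sub_eq_zero, ← Finset.sum_sub_distrib]
    have hstep : ∀ i : ι,
        (br (a j) (a i) ⊗ₜ[K] (α (b i) ⊗ₜ[K] α (b j))
            + eps K (p j) (p i) • (α (a i) ⊗ₜ[K] (br (a j) (b i) ⊗ₜ[K] α (b j))))
          - ((eps K (q i) (p j) * eps K (p i) (p j)) •
              (br (a j) (a i) ⊗ₜ[K] (α (b i) ⊗ₜ[K] α (b j)))
            + eps K (q i) (p j) • (α (a i) ⊗ₜ[K] (br (a j) (b i) ⊗ₜ[K] α (b j))))
        = ((2:K)⁻¹ * (1 - sg K (p j))) • ((1 - sg K (p i) * sg K (q i)) •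
            (br (a j) (a i) ⊗ₜ[K] (α (b i) ⊗ₜ[K] α (b j))
              + eps K (p j) (p i) •
                (α (a i) ⊗ₜ[K] (br (a j) (b i) ⊗ₜ[K] α (b j))))) := by
      intro i
      calc br (a j) (a i) ⊗ₜ[K] (α (b i) ⊗ₜ[K] α (b j))
            + eps K (p j) (p i) • (α (a i) ⊗ₜ[K] (br (a j) (b i) ⊗ₜ[K] α (b j)))
          - ((eps K (q i) (p j) * eps K (p i) (p j)) •
              (br (a j) (a i) ⊗ₜ[K] (α (b i) ⊗ₜ[K] α (b j)))
            + eps K (q i) (p j) • (α (a i) ⊗ₜ[K] (br (a j) (b i) ⊗ₜ[K] α (b j))))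
          = (1 - eps K (q i) (p j) * eps K (p i) (p j)) •
              (br (a j) (a i) ⊗ₜ[K] (α (b i) ⊗ₜ[K] α (b j)))
            + (eps K (p j) (p i) - eps K (q i) (p j)) •
              (α (a i) ⊗ₜ[K] (br (a j) (b i) ⊗ₜ[K] α (b j))) := by module
        _ = _ := by
            rw [scalar_s1 (p j) (p i) (q i), scalar_s2 (p j) (p i) (q i)]
            module
    rw [Finset.sum_congr rfl fun i _ => hstep i, ← Finset.smul_sum]
    have hphi : (∑ i, (1 - sg K (p i) * sg K (q i)) •
          (br (a j) (a i) ⊗ₜ[K] (α (b i) ⊗ₜ[K] α (b j))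
            + eps K (p j) (p i) • (α (a i) ⊗ₜ[K] (br (a j) (b i) ⊗ₜ[K] α (b j)))))
        = ((TensorProduct.assoc K L L L).toLinearMap
              ∘ₗ (TensorProduct.mk K (L ⊗[K] L) L).flip (α (b j)))
            (∑ i, (1 - sg K (p i) * sg K (q i)) •
              (br (a j) (a i) ⊗ₜ[K] α (b i)
                + eps K (p j) (p i) • (α (a i) ⊗ₜ[K] br (a j) (b i)))) := by
      rw [map_sum]
      refine Finset.sum_congr rfl fun i _ => ?_
      simp [TensorProduct.assoc_tmul, TensorProduct.add_tmul,
        TensorProduct.smul_tmul', TensorProduct.tmul_smul]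
    rw [hphi, hINV (p j) (a j) (ha j), map_zero, smul_zero]
  have hB : (TensorProduct.assoc K L L L).toLinearMap (TensorProduct.map Δ α r)
      = -br1213 σ br α r r - br1223 br α r r := by
    rw [hΔα, h13, h23]
    simp only [Finset.sum_neg_distrib, neg_neg, sub_neg_eq_add]
    rw [← Finset.sum_add_distrib]
    exact Finset.sum_congr rfl fun j _ => by
      rw [← Finset.sum_add_distrib]; exact key j
  -- final assembly
  have hch : chybeEl σ br α r
      = br1213 σ br α r r + br1223 br α r r + br1323 σ br α r r := rfl
  set b1 := br1213 σ br α r r with hb1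
  set b2 := br1223 br α r r with hb2
  set b3 := br1323 σ br α r r with hb3
  constructor
  · constructor
    · intro h
      rw [hA, eq_neg_iff_add_eq_zero]
      have e : b2 + b3 + b1 = b1 + b2 + b3 := by abel
      rw [e, ← hch]; exact h
    · intro h
      rw [hch, add_assoc, hA.symm.trans h]
      simp
  · constructor
    · intro h
      rw [hB, ← sub_eq_zero]
      have e : -b1 - b2 - b3 = -(b1 + b2 + b3) := by abel
      rw [e, ← hch, h, neg_zero]
    · intro h
      rw [hch, h.symm.trans hB]
      abel
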